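/- arXiv:2508.17950 — 6 statements merged into one kernel-verified Lean document; each statement's English description precedes it below -/
import Mathlib

section
/- Let q = ln 2 / ln(3/2) and define x(t) = (t^q − t^{q+1}) / (1 − t^q) for real t > 0, t ≠ 1. Then x is strictly increasing on (0,1) and on (1,∞); more precisely, its derivative x′(t) = t^{q−1}(t^{q+1} − (q+1)t + q)/(t^q − 1)^2 is positive for all t > 0 with t ≠ 1. -/
open Real Set

-- auxiliary: derivative of g t = t^(q+1) - (q+1)*t + q
lemma aux_g_deriv (q : ℝ) {t : ℝ} (ht : 0 < t) :
    HasDerivAt (fun s : ℝ => s ^ (q + 1) - (q + 1) * s + q) ((q + 1) * (t ^ q - 1)) t := by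
  have h1 : HasDerivAt (fun s : ℝ => s ^ (q + 1)) ((q + 1) * t ^ (q + 1 - 1)) t :=
    Real.hasDerivAt_rpow_const (Or.inl ht.ne')
  have h2 : HasDerivAt (fun s : ℝ => (q + 1) * s) (q + 1) t := by
    simpa using (hasDerivAt_id t).const_mul (q + 1)
  have := (h1.sub h2).add_const q
  have he : q + 1 - 1 = q := by ring
  rw [he] at this
  refine this.congr_deriv ?_
  ring

-- auxiliary: g positive away from 1
lemma aux_g_pos (q : ℝ) (hq0 : 0 < q) {t : ℝ} (ht : 0 < t) (htne : t ≠ 1) :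
    0 < t ^ (q + 1) - (q + 1) * t + q := by
  set g : ℝ → ℝ := fun s => s ^ (q + 1) - (q + 1) * s + q with hg
  have hg1 : g 1 = 0 := by simp [hg]
  rcases lt_or_gt_of_ne htne with h1 | h1
  · -- t < 1 : g strictly antitone on Ioc 0 1
    have hanti : StrictAntiOn g (Ioc 0 1) := by
      apply StrictAntiOn.mono (s := Ioc (0:ℝ) 1)
        (strictAntiOn_of_deriv_neg (convex_Ioc 0 1) ?_ ?_) le_rfl
      · intro x hx
        exact ((aux_g_deriv q hx.1).continuousAt).continuousWithinAt
      · intro x hx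
        rw [interior_Ioc] at hx
        rw [(aux_g_deriv q hx.1).deriv]
        have hxq : x ^ q < 1 := Real.rpow_lt_one hx.1.le hx.2 hq0
        have : t ^ q < 1 ∨ True := Or.inr trivial
        nlinarith
    have := hanti ⟨ht, h1.le⟩ ⟨one_pos, le_rfl⟩ h1
    rw [hg1] at this
    exact this
  · -- t > 1 : g strictly monotone on Ici 1
    have hmono : StrictMonoOn g (Ici 1) := by
      apply strictMonoOn_of_deriv_pos (convex_Ici 1) ?_ ?_
      · intro x hx
        exact ((aux_g_deriv q (lt_of_lt_of_le one_pos hx)).continuousAt).continuousWithinAt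
      · intro x hx
        rw [interior_Ici] at hx
        rw [(aux_g_deriv q (lt_trans one_pos hx)).deriv]
        have hxq : 1 < x ^ q := Real.one_lt_rpow_iff_of_pos (lt_trans one_pos hx) |>.mpr
          (Or.inl ⟨hx, hq0⟩)
        nlinarith
    have := hmono (self_mem_Ici) (le_of_lt h1) h1
    rw [hg1] at this
    exact this

lemma aux_tq_ne (q : ℝ) (hq0 : 0 < q) {t : ℝ} (ht : 0 < t) (htne : t ≠ 1) :
    t ^ q ≠ 1 := by
  rcases lt_or_gt_of_ne htne with h1 | h1
  · exact ne_of_lt (Real.rpow_lt_one ht.le h1 hq0)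
  · exact ne_of_gt ((Real.one_lt_rpow_iff_of_pos ht).mpr (Or.inl ⟨h1, hq0⟩))

lemma aux_deriv (q : ℝ) (hq0 : 0 < q) {t : ℝ} (ht : 0 < t) (htne : t ≠ 1) :
    HasDerivAt (fun s : ℝ => (s ^ q - s ^ (q + 1)) / (1 - s ^ q))
      (t ^ (q - 1) * (t ^ (q + 1) - (q + 1) * t + q) / (t ^ q - 1) ^ 2) t := by
  have hne : (1 : ℝ) - t ^ q ≠ 0 := by
    intro h
    exact aux_tq_ne q hq0 ht htne (by linarith)
  have hq' : HasDerivAt (fun s : ℝ => s ^ q) (q * t ^ (q - 1)) t :=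
    Real.hasDerivAt_rpow_const (Or.inl ht.ne')
  have hq1 : HasDerivAt (fun s : ℝ => s ^ (q + 1)) ((q + 1) * t ^ q) t := by
    have := Real.hasDerivAt_rpow_const (p := q + 1) (Or.inl ht.ne')
    have he : q + 1 - 1 = q := by ring
    rwa [he] at this
  have hnum := hq'.sub hq1
  have hden : HasDerivAt (fun s : ℝ => 1 - s ^ q) (0 - q * t ^ (q - 1)) t :=
    (hasDerivAt_const t (1:ℝ)).sub hq'
  have hdiv := hnum.div hden hne
  simp only [Pi.sub_apply] at hdiv; refine hdiv.congr_deriv (Eq.symm ?_)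
  -- algebraic identity
  have ha1 : t ^ q = t ^ (q - 1) * t := by
    rw [← Real.rpow_add_one ht.ne']
    ring_nf
  have ha2 : t ^ (q + 1) = t ^ (q - 1) * t * t := by
    rw [← Real.rpow_add_one ht.ne', ← Real.rpow_add_one ht.ne']
    ring_nf
  have h3 : t ^ q - 1 ≠ 0 := sub_ne_zero.mpr (aux_tq_ne q hq0 ht htne)
  rw [div_eq_div_iff (pow_ne_zero 2 h3) (pow_ne_zero 2 hne)]
  rw [ha1, ha2]; ring

lemma aux_pos (q : ℝ) (hq0 : 0 < q) {t : ℝ} (ht : 0 < t) (htne : t ≠ 1) :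
    0 < t ^ (q - 1) * (t ^ (q + 1) - (q + 1) * t + q) / (t ^ q - 1) ^ 2 := by
  have h1 : (0:ℝ) < t ^ (q - 1) := Real.rpow_pos_of_pos ht _
  have h2 := aux_g_pos q hq0 ht htne
  have h3 : t ^ q - 1 ≠ 0 := sub_ne_zero.mpr (aux_tq_ne q hq0 ht htne)
  positivity

theorem stmt5 (q : ℝ) (hq : q = Real.log 2 / Real.log (3 / 2)) :
    StrictMonoOn (fun t : ℝ => (t ^ q - t ^ (q + 1)) / (1 - t ^ q)) (Set.Ioo 0 1) ∧
    StrictMonoOn (fun t : ℝ => (t ^ q - t ^ (q + 1)) / (1 - t ^ q)) (Set.Ioi 1) ∧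
    ∀ t : ℝ, 0 < t → t ≠ 1 →
      HasDerivAt (fun s : ℝ => (s ^ q - s ^ (q + 1)) / (1 - s ^ q))
        (t ^ (q - 1) * (t ^ (q + 1) - (q + 1) * t + q) / (t ^ q - 1) ^ 2) t ∧
      0 < t ^ (q - 1) * (t ^ (q + 1) - (q + 1) * t + q) / (t ^ q - 1) ^ 2 := by
  have hq0 : 0 < q := by
    rw [hq]
    exact div_pos (Real.log_pos (by norm_num)) (Real.log_pos (by norm_num))
  refine ⟨?_, ?_, fun t ht htne => ⟨aux_deriv q hq0 ht htne, aux_pos q hq0 ht htne⟩⟩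
  · apply strictMonoOn_of_deriv_pos (convex_Ioo 0 1)
    · intro x hx
      exact ((aux_deriv q hq0 hx.1 (ne_of_lt hx.2)).continuousAt).continuousWithinAt
    · intro x hx
      rw [interior_Ioo] at hx
      rw [(aux_deriv q hq0 hx.1 (ne_of_lt hx.2)).deriv]
      exact aux_pos q hq0 hx.1 (ne_of_lt hx.2)
  · apply strictMonoOn_of_deriv_pos (convex_Ioi 1)
    · intro x hx
      exact ((aux_deriv q hq0 (lt_trans one_pos hx) (ne_of_gt hx)).continuousAt).continuousWithinAt
    · intro x hx
      rw [interior_Ioi] at hx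
      rw [(aux_deriv q hq0 (lt_trans one_pos hx) (ne_of_gt hx)).deriv]
      exact aux_pos q hq0 (lt_trans one_pos hx) (ne_of_gt hx)
end

section
/- Fix a real q > 1. For every real y ≥ 1, there is a unique t ∈ (y, y+1) with t^q (y + 1 − t) = y, and this t satisfies y + 1 − y^{1−q} ≤ t < y + 1. -/
theorem stmt9 (q y : ℝ) (hq : 1 < q) (hy : 1 ≤ y) :
    (∃! t : ℝ, y < t ∧ t < y + 1 ∧ t ^ q * (y + 1 - t) = y) ∧
    ∀ t : ℝ, y < t → t < y + 1 → t ^ q * (y + 1 - t) = y →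
      y + 1 - y ^ (1 - q) ≤ t := by
  have hy0 : (0:ℝ) < y := lt_of_lt_of_le one_pos hy
  set f : ℝ → ℝ := fun t => t ^ q * (y + 1 - t) with hf
  set c : ℝ := q * (y + 1) / (q + 1) with hc
  have hq0 : (0:ℝ) < q + 1 := by linarith
  have hcy1 : c < y + 1 := by
    rw [hc, div_lt_iff₀ hq0]; nlinarith
  -- derivative of f at positive points
  have hderiv : ∀ t : ℝ, 0 < t →
      HasDerivAt f (t ^ (q-1) * (q * (y + 1) - (q+1) * t)) t := by
    intro t ht
    have h1 : HasDerivAt (fun x : ℝ => x ^ q) (q * t ^ (q-1)) t :=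
      Real.hasDerivAt_rpow_const (Or.inr hq.le)
    have h2 : HasDerivAt (fun x : ℝ => y + 1 - x) (-1) t := by
      simpa using (hasDerivAt_id t).const_sub (y+1)
    have htq : t ^ (q-1) * t = t ^ q := by
      rw [← Real.rpow_add_one ht.ne' (q-1)]; ring_nf
    have := h1.mul h2
    exact this.congr_deriv (by rw [← htq]; ring)
  have hpos : ∀ x : ℝ, y ≤ x → 0 < x := fun x hx => lt_of_lt_of_le hy0 hx
  set a : ℝ := max y c with ha
  have hay : y ≤ a := le_max_left _ _
  have ha1 : a < y + 1 := max_lt (by linarith) hcy1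
  have hanti : StrictAntiOn f (Set.Icc a (y+1)) := by
    apply strictAntiOn_of_deriv_neg (convex_Icc _ _)
    · intro x hx
      exact ((hderiv x (hpos x (hay.trans hx.1))).continuousAt).continuousWithinAt
    · intro x hx
      rw [interior_Icc] at hx
      have hx0 : 0 < x := hpos x (le_of_lt (lt_of_le_of_lt hay hx.1))
      rw [(hderiv x hx0).deriv]
      apply mul_neg_of_pos_of_neg (Real.rpow_pos_of_pos hx0 _)
      have hcx : c < x := lt_of_le_of_lt (le_max_right _ _) hx.1
      rw [hc, div_lt_iff₀ hq0] at hcx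
      nlinarith
  have hmono : y < c → StrictMonoOn f (Set.Icc y c) := by
    intro hyc
    apply strictMonoOn_of_deriv_pos (convex_Icc _ _)
    · intro x hx
      exact ((hderiv x (hpos x hx.1)).continuousAt).continuousWithinAt
    · intro x hx
      rw [interior_Icc] at hx
      have hx0 : 0 < x := hpos x hx.1.le
      rw [(hderiv x hx0).deriv]
      apply mul_pos (Real.rpow_pos_of_pos hx0 _)
      have hxc : x < c := hx.2
      rw [hc, lt_div_iff₀ hq0] at hxc
      nlinarith
  have hfy : f y = y ^ q := by simp [hf]
  have hfyy : y ≤ y ^ q := by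
    calc y = y ^ (1:ℝ) := (Real.rpow_one y).symm
    _ ≤ y ^ q := Real.rpow_le_rpow_of_exponent_le hy hq.le
  have hfa : y < f a := by
    rcases le_or_gt c y with h | h
    · have hay' : a = y := max_eq_left h
      have hyq : q ≤ y := by
        rw [hc, div_le_iff₀ hq0] at h; nlinarith
      rw [hay', hfy]
      calc y = y ^ (1:ℝ) := (Real.rpow_one y).symm
      _ < y ^ q := Real.rpow_lt_rpow_of_exponent_lt (lt_of_lt_of_le hq hyq) hq
    · have hac : a = c := max_eq_right h.le
      have := (hmono h) (Set.left_mem_Icc.2 h.le) (Set.right_mem_Icc.2 h.le) h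
      rw [hac]
      calc y ≤ y ^ q := hfyy
      _ = f y := hfy.symm
      _ < f c := this
  have hroot_gt : ∀ t, y < t → t < y + 1 → f t = y → a < t := by
    intro t hty ht1 hft
    by_contra hta
    push_neg at hta
    rcases le_or_gt c y with h | h
    · rw [ha.trans (max_eq_left h)] at hta; exact absurd hta (not_le.2 hty)
    · rw [ha.trans (max_eq_right h.le)] at hta
      have := (hmono h) (Set.left_mem_Icc.2 h.le) ⟨hty.le, hta⟩ hty
      rw [hfy, hft] at this
      exact absurd hfyy (not_le.2 this)
  have hfy1 : f (y+1) = 0 := by simp [hf]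
  -- existence
  obtain ⟨t₀, ht₀mem, ht₀⟩ : ∃ t₀ ∈ Set.Ioo a (y+1), f t₀ = y := by
    have hsub := intermediate_value_Ioo' (le_of_lt ha1)
      (fun x hx => ((hderiv x (hpos x (hay.trans hx.1))).continuousAt).continuousWithinAt)
    have : y ∈ Set.Ioo (f (y+1)) (f a) := by
      rw [hfy1]; exact ⟨hy0, hfa⟩
    obtain ⟨t₀, ht₀, heq⟩ := hsub this
    exact ⟨t₀, ht₀, heq⟩
  constructor
  · refine ⟨t₀, ⟨lt_of_le_of_lt hay ht₀mem.1, ht₀mem.2, ht₀⟩, ?_⟩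
    intro t ⟨hty, ht1, hft⟩
    have h1 : a < t := hroot_gt t hty ht1 hft
    apply hanti.injOn ⟨h1.le, ht1.le⟩ ⟨ht₀mem.1.le, ht₀mem.2.le⟩
    rw [ht₀]; exact hft
  · intro t hty ht1 hft
    have htq : y ^ q ≤ t ^ q := Real.rpow_le_rpow hy0.le hty.le (by linarith)
    have h2 : y ^ q * (y + 1 - t) ≤ t ^ q * (y + 1 - t) :=
      mul_le_mul_of_nonneg_right htq (by linarith)
    rw [hft] at h2
    have hyqpos : 0 < y ^ q := Real.rpow_pos_of_pos hy0 q
    have h3 : y + 1 - t ≤ y / y ^ q := (le_div_iff₀ hyqpos).2 (by linarith [h2])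
    have h4 : y ^ (1 - q) = y / y ^ q := by
      rw [Real.rpow_sub hy0, Real.rpow_one]
    linarith [h4 ▸ h3]
end

section
/- For every q ∈ [1,2] and all reals a, b ≥ 0, (a + b)^q ≤ a^q + q·a^{q−1}·b + b^q. -/
lemma aux_rpow_subadd {x y p : ℝ} (hx : 0 ≤ x) (hy : 0 ≤ y) (hp0 : 0 ≤ p) (hp1 : p ≤ 1) :
    (x + y) ^ p ≤ x ^ p + y ^ p := by
  have h := NNReal.coe_le_coe.2 (NNReal.rpow_add_le_add_rpow x.toNNReal y.toNNReal hp0 hp1)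
  rw [← Real.toNNReal_add hx hy] at h
  rw [NNReal.coe_rpow, NNReal.coe_add, NNReal.coe_rpow, NNReal.coe_rpow] at h
  rwa [Real.coe_toNNReal _ (by positivity), Real.coe_toNNReal x hx,
    Real.coe_toNNReal y hy] at h

theorem stmt10 (q a b : ℝ) (hq : q ∈ Set.Icc (1 : ℝ) 2) (ha : 0 ≤ a) (hb : 0 ≤ b) :
    (a + b) ^ q ≤ a ^ q + q * a ^ (q - 1) * b + b ^ q := by
  obtain ⟨hq1, hq2⟩ := hq
  have hq0 : (0:ℝ) < q := lt_of_lt_of_le one_pos hq1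
  rcases eq_or_lt_of_le ha with rfl | ha'
  · have h0 : (0:ℝ) ^ q = 0 := Real.zero_rpow (ne_of_gt hq0)
    have h1 : 0 ≤ q * (0:ℝ) ^ (q - 1) * b := by positivity
    simp only [zero_add, h0]
    linarith
  · set g : ℝ → ℝ := fun x => a ^ q + q * a ^ (q - 1) * x + x ^ q - (a + x) ^ q with hg
    have hd : ∀ x : ℝ, HasDerivAt g
        (q * a ^ (q - 1) + q * x ^ (q - 1) - q * (a + x) ^ (q - 1) * 1) x := by
      intro x
      have h1 : HasDerivAt (fun x : ℝ => x ^ q) (q * x ^ (q - 1)) x := by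
        simpa [mul_comm] using Real.hasDerivAt_rpow_const (x := x) (p := q) (Or.inr hq1)
      have h2 : HasDerivAt (fun x : ℝ => (a + x) ^ q) (q * (a + x) ^ (q - 1) * 1) x := by
        have hi : HasDerivAt (fun x : ℝ => a + x) 1 x := (hasDerivAt_id x).const_add a
        have := (Real.hasDerivAt_rpow_const (x := a + x) (p := q) (Or.inr hq1)).comp x hi
        simpa [mul_comm, Function.comp_def] using this
      have h3 : HasDerivAt (fun x : ℝ => a ^ q + q * a ^ (q - 1) * x)
          (q * a ^ (q - 1)) x := by
        simpa using ((hasDerivAt_id x).const_mul (q * a ^ (q - 1))).const_add (a ^ q)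
      exact (h3.add h1).sub h2
    have hmono : MonotoneOn g (Set.Ici (0:ℝ)) := by
      apply monotoneOn_of_deriv_nonneg (convex_Ici 0)
      · exact fun x _ => ((hd x).differentiableAt.continuousAt).continuousWithinAt
      · intro x hx
        exact (hd x).differentiableAt.differentiableWithinAt
      · intro x hx
        rw [(hd x).deriv]
        rw [interior_Ici] at hx
        have hsub : (a + x) ^ (q - 1) ≤ a ^ (q - 1) + x ^ (q - 1) :=
          aux_rpow_subadd ha (le_of_lt hx) (by linarith) (by linarith)
        nlinarith [mul_le_mul_of_nonneg_left hsub (le_of_lt hq0)]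
    have h0 : g 0 = 0 := by
      simp [hg, Real.zero_rpow (ne_of_gt hq0)]
    have := hmono (Set.self_mem_Ici) (Set.mem_Ici.2 hb) hb
    rw [h0] at this
    simp only [hg] at this
    linarith
end

section
/- For every q ∈ [1,2] and every real t ≥ 0, (1 + t)^q ≤ 1 + q·t + t^q. -/
open Real

lemma rpow_one_add_le (x p : ℝ) (hx : 0 ≤ x) (hp : 0 ≤ p) (hp1 : p ≤ 1) :
    (1 + x) ^ p ≤ 1 + x ^ p := by
  lift x to NNReal using hx
  have := NNReal.rpow_add_le_add_rpow 1 x hp hp1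
  have h := (NNReal.coe_le_coe).2 this
  push_cast at h
  simpa using h

theorem stmt11 (q t : ℝ) (hq : q ∈ Set.Icc (1 : ℝ) 2) (ht : 0 ≤ t) :
    (1 + t) ^ q ≤ 1 + q * t + t ^ q := by
  obtain ⟨hq1, hq2⟩ := hq
  set g : ℝ → ℝ := fun x => 1 + q * x + x ^ q - (1 + x) ^ q with hg
  have hderiv : ∀ x : ℝ, HasDerivAt g (q + q * x ^ (q - 1) - q * (1 + x) ^ (q - 1)) x := by
    intro x
    have h1 : HasDerivAt (fun x : ℝ => x ^ q) (q * x ^ (q - 1)) x := by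
      simpa [mul_comm] using Real.hasDerivAt_rpow_const (x := x) (p := q) (Or.inr hq1)
    have h2 : HasDerivAt (fun x : ℝ => (1 + x) ^ q) (q * (1 + x) ^ (q - 1)) x := by
      have h3 : HasDerivAt (fun x : ℝ => (1 + x)) 1 x := by
        simpa using (hasDerivAt_id x).const_add 1
      have := (Real.hasDerivAt_rpow_const (x := 1 + x) (p := q) (Or.inr hq1)).comp x h3
      simpa [mul_comm, Function.comp_def] using this
    have h4 : HasDerivAt (fun x : ℝ => 1 + q * x) q x := by
      simpa using ((hasDerivAt_id x).const_mul q).const_add 1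
    exact (h4.add h1).sub h2
  have hmono : MonotoneOn g (Set.Ici (0 : ℝ)) := by
    apply monotoneOn_of_deriv_nonneg (convex_Ici 0)
    · exact fun x _ => (hderiv x).continuousAt.continuousWithinAt
    · exact fun x _ => ((hderiv x).differentiableAt).differentiableWithinAt
    · intro x hx
      rw [interior_Ici] at hx
      rw [(hderiv x).deriv]
      have hxpos : (0:ℝ) < x := hx
      have hsub : (1 + x) ^ (q - 1) ≤ 1 + x ^ (q - 1) :=
        rpow_one_add_le x (q - 1) hxpos.le (by linarith) (by linarith)
      have hq0 : (0:ℝ) ≤ q := by linarith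
      nlinarith [mul_le_mul_of_nonneg_left hsub hq0]
  have h0 : g 0 ≤ g t := by
    apply hmono (Set.self_mem_Ici) (Set.mem_Ici.2 ht) ht
  have hg0 : g 0 = 0 := by
    simp [hg, Real.zero_rpow (by linarith : q ≠ 0)]
  rw [hg0] at h0
  simp only [hg] at h0
  linarith
end

section
/- Let q = ln 2 / ln(3/2) and for an integer m ≥ 2 let δ = m^{1−q}. Then (m + 1 − δ)^q · δ < m + q. -/
theorem stmt12 (q : ℝ) (hq : q = Real.log 2 / Real.log (3 / 2)) (m : ℕ) (hm : 2 ≤ m) :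
    ((m : ℝ) + 1 - (m : ℝ) ^ (1 - q)) ^ q * (m : ℝ) ^ (1 - q) < (m : ℝ) + q := by
  have hM : (2 : ℝ) ≤ (m : ℝ) := by exact_mod_cast hm
  have hM1 : (1 : ℝ) < (m : ℝ) := by linarith
  have hM0 : (0 : ℝ) < (m : ℝ) := by linarith
  have hL32 : 0 < Real.log (3 / 2) := Real.log_pos (by norm_num)
  have hq1 : 1 < q := by
    rw [hq, lt_div_iff₀ hL32, one_mul]
    exact Real.log_lt_log (by norm_num) (by norm_num)
  have hq2 : q < 2 := by
    rw [hq, div_lt_iff₀ hL32]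
    have : (2 : ℝ) * Real.log (3 / 2) = Real.log ((3 / 2) ^ (2 : ℕ)) := by
      rw [Real.log_pow]; push_cast; ring
    rw [this]
    exact Real.log_lt_log (by norm_num) (by norm_num)
  set δ : ℝ := (m : ℝ) ^ (1 - q) with hδ
  have hδ0 : 0 < δ := Real.rpow_pos_of_pos hM0 _
  have hδ1 : δ < 1 := Real.rpow_lt_one_of_one_lt_of_neg hM1 (by linarith)
  have hmδ : 1 ≤ (m : ℝ) * δ := by
    have : (m : ℝ) ^ (-1 : ℝ) ≤ (m : ℝ) ^ (1 - q) :=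
      Real.rpow_le_rpow_of_exponent_le hM1.le (by linarith)
    rw [Real.rpow_neg_one] at this
    have h2 : (m : ℝ) * (m : ℝ)⁻¹ = 1 := by field_simp
    nlinarith [this]
  set x : ℝ := (1 - δ) / m with hx
  have hx0 : 0 < x := div_pos (by linarith) hM0
  have hxm : x * m = 1 - δ := by rw [hx]; exact div_mul_cancel₀ _ hM0.ne'
  have hA : (m : ℝ) + 1 - δ = m * (1 + x) := by
    field_simp [hx]; linear_combination -hxm
  have h1x : (0 : ℝ) ≤ 1 + x := by linarith
  have key : ((m : ℝ) + 1 - δ) ^ q = (m : ℝ) ^ q * (1 + x) ^ q := by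
    rw [hA, Real.mul_rpow hM0.le h1x]
  have hpow : (m : ℝ) ^ q * δ = m := by
    rw [hδ, ← Real.rpow_add hM0, show q + (1 - q) = 1 by ring, Real.rpow_one]
  have bern : (1 + x) ^ (q - 1) ≤ 1 + (q - 1) * x := by
    have := rpow_one_add_le_one_add_mul_self (s := x) (by linarith) (p := q - 1)
      (by linarith) (by linarith)
    simpa [mul_comm] using this
  have hsplit : (1 + x) ^ q = (1 + x) ^ (q - 1) * (1 + x) := by
    rw [← Real.rpow_add_one (by linarith : (1:ℝ) + x ≠ 0)]
    ring_nf
  have hub : (1 + x) ^ q ≤ (1 + (q - 1) * x) * (1 + x) := by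
    rw [hsplit]
    exact mul_le_mul_of_nonneg_right bern h1x
  calc ((m : ℝ) + 1 - δ) ^ q * δ = (m : ℝ) ^ q * δ * (1 + x) ^ q := by
        rw [key]; ring
    _ = (m : ℝ) * (1 + x) ^ q := by rw [hpow]
    _ ≤ (m : ℝ) * ((1 + (q - 1) * x) * (1 + x)) :=
        mul_le_mul_of_nonneg_left hub hM0.le
    _ < (m : ℝ) + q := by
        have hxδ : x < δ := by nlinarith
        have p1 : x * (1 - δ) < δ := by nlinarith
        have hfin : (q - 1) * (x * (1 - δ)) < q * δ := by
          nlinarith [mul_pos hx0 (show (0:ℝ) < 1 - δ by linarith)]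
        have hexp : (m : ℝ) * ((1 + (q - 1) * x) * (1 + x))
            = (m : ℝ) + q * (x * m) + (q - 1) * (x * (x * m)) := by ring
        rw [hxm] at hexp
        rw [hexp]
        nlinarith [hfin]
end

section
/- There is no integer i ≥ 3 such that 3^i = (2^i − 1)(m + 1) for some integer m with m = ⌊(3/2)^i⌋. -/
lemma pow3mod8 : ∀ k : ℕ, 3 ^ k % 8 = 1 ∨ 3 ^ k % 8 = 3
  | 0 => Or.inl rfl
  | 1 => Or.inr rfl
  | (k + 2) => by
      have h := pow3mod8 k
      have h9 : (3 : ℕ) ^ (k + 2) = 9 * 3 ^ k := by ring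
      rw [h9, Nat.mul_mod]
      rcases h with h | h <;> rw [h] <;> decide

theorem stmt14 :
    ¬ ∃ i : ℕ, 3 ≤ i ∧ ∃ m : ℤ, m = ⌊((3 : ℚ) / 2) ^ i⌋ ∧
      (3 : ℤ) ^ i = (2 ^ i - 1) * (m + 1) := by
  rintro ⟨i, hi, m, hm, heq⟩
  have h2 : (1 : ℕ) ≤ 2 ^ i := Nat.one_le_two_pow
  have hd : ((2 : ℤ) ^ i - 1) ∣ 3 ^ i := ⟨m + 1, heq⟩
  have hdn : (2 ^ i - 1 : ℕ) ∣ 3 ^ i := by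
    have : ((2 ^ i - 1 : ℕ) : ℤ) ∣ ((3 ^ i : ℕ) : ℤ) := by
      rw [Nat.cast_sub h2]; push_cast; exact hd
    exact_mod_cast this
  obtain ⟨k, hk, hek⟩ := (Nat.dvd_prime_pow Nat.prime_three).mp hdn
  have h8 : 8 ∣ 2 ^ i := by
    have := pow_dvd_pow 2 hi
    norm_num at this
    exact this
  have hge : 8 ≤ 2 ^ i := Nat.le_of_dvd (Nat.pos_of_ne_zero (by positivity)) h8
  have hmod := pow3mod8 k
  omega
end
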